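/- Let U, V, U', V' be independent real Gaussian random variables, each with mean 0 and variance 1/2, let A = √(U² + V²) and A' = √(U'² + V'²) (so A, A' are i.i.d. Rayleigh-distributed moduli of standard complex Gaussians), and let ω be a real random variable independent of (A, A') with density f_ω(x) = (1/(2π))·(1 - |x|/(2π)) on [-2π, 2π]. Then the complex random variable W = A - A'·e^{-iω} satisfies E[W] = √π/2 and E[|W - E[W]|²] = (8 - π)/4. -/

import Mathlib

open MeasureTheory ProbabilityTheory Real
open scoped NNReal ENNReal

/-- The triangular density of the difference of two independent uniform `(0, 2π)` phases. -/
noncomputable def omegaPDF (x : ℝ) : ℝ :=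
  if x ∈ Set.Icc (-(2 * Real.pi)) (2 * Real.pi) then
    (1 / (2 * Real.pi)) * (1 - |x| / (2 * Real.pi))
  else 0

/-- The joint law of `(U, V, U', V', ω)`: four independent real Gaussians with mean `0`
and variance `1/2`, and an independent phase difference `ω` with density `omegaPDF`. -/
noncomputable def jointLaw : Measure (ℝ × ℝ × ℝ × ℝ × ℝ) :=
  (gaussianReal 0 (1/2 : NNReal)).prod
    ((gaussianReal 0 (1/2 : NNReal)).prod
      ((gaussianReal 0 (1/2 : NNReal)).prod
        ((gaussianReal 0 (1/2 : NNReal)).prod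
          (volume.withDensity fun x => ENNReal.ofReal (omegaPDF x)))))

/-- `W = A - A' e^{-iω}` where `A = √(U²+V²)`, `A' = √(U'²+V'²)` are the Rayleigh moduli. -/
noncomputable def W (p : ℝ × ℝ × ℝ × ℝ × ℝ) : ℂ :=
  (Real.sqrt (p.1 ^ 2 + p.2.1 ^ 2) : ℂ) -
    (Real.sqrt (p.2.2.1 ^ 2 + p.2.2.2.1 ^ 2) : ℂ) * Complex.exp (-Complex.I * (p.2.2.2.2 : ℂ))

namespace MVAux

lemma omegaPDF_nonneg (x : ℝ) : 0 ≤ omegaPDF x := by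
  unfold omegaPDF
  split_ifs with h
  · have h2π : (0:ℝ) < 2 * π := by positivity
    have habs : |x| ≤ 2 * π := abs_le.mpr ⟨by linarith [h.1], h.2⟩
    have h1 : |x| / (2*π) ≤ 1 := (div_le_one h2π).mpr habs
    have h0 : (0:ℝ) ≤ |x| / (2*π) := by positivity
    have : (0:ℝ) ≤ 1 - |x|/(2*π) := by linarith
    positivity
  · exact le_refl 0

lemma omegaPDF_eq_indicator :
    omegaPDF = Set.indicator (Set.Icc (-(2*π)) (2*π))
      (fun x => (1/(2*π)) * (1 - |x|/(2*π))) := by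
  funext x
  rw [Set.indicator_apply, omegaPDF]

lemma omegaPDF_measurable : Measurable omegaPDF := by
  rw [omegaPDF_eq_indicator]
  exact Measurable.indicator (by fun_prop) measurableSet_Icc

lemma integrable_omegaPDF_mul {h : ℝ → ℝ} (hc : Continuous h) :
    Integrable (fun x => omegaPDF x * h x) volume := by
  rw [omegaPDF_eq_indicator]
  have : (fun x => Set.indicator (Set.Icc (-(2*π)) (2*π))
      (fun x => (1/(2*π)) * (1 - |x|/(2*π))) x * h x)
      = Set.indicator (Set.Icc (-(2*π)) (2*π))
        (fun x => (1/(2*π)) * (1 - |x|/(2*π)) * h x) := by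
    funext x
    rw [Set.indicator_apply, Set.indicator_apply]
    split_ifs <;> simp
  rw [this]
  refine (IntegrableOn.integrable_indicator ?_ measurableSet_Icc)
  exact (Continuous.integrableOn_Icc (by fun_prop))

lemma integral_x_cos (a b : ℝ) :
    ∫ x in a..b, x * Real.cos x = (b * sin b + cos b) - (a * sin a + cos a) := by
  refine intervalIntegral.integral_eq_sub_of_hasDerivAt
    (f := fun y => y * Real.sin y + Real.cos y) (fun x _ => ?_) ?_
  · have := ((hasDerivAt_id x).mul (Real.hasDerivAt_sin x)).add (Real.hasDerivAt_cos x)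
    convert this using 1
    · rfl
    · simp only [id_eq]
      ring
  · exact (continuous_id.mul Real.continuous_cos).intervalIntegrable a b

lemma integral_x_sin (a b : ℝ) :
    ∫ x in a..b, x * Real.sin x = (sin b - b * cos b) - (sin a - a * cos a) := by
  refine intervalIntegral.integral_eq_sub_of_hasDerivAt
    (f := fun y => Real.sin y - y * Real.cos y) (fun x _ => ?_) ?_
  · have := (Real.hasDerivAt_sin x).sub ((hasDerivAt_id x).mul (Real.hasDerivAt_cos x))
    convert this using 1
    · rfl
    · simp only [id_eq]
      ring
  · exact (continuous_id.mul Real.continuous_sin).intervalIntegrable a b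

lemma integral_omegaPDF_mul {h : ℝ → ℝ} (hc : Continuous h) :
    ∫ x, omegaPDF x * h x
      = (1/(2*π)) * ((∫ x in (-(2*π))..(0:ℝ), h x) + ∫ x in (0:ℝ)..(2*π), h x)
        + (1/(4*π^2)) * ((∫ x in (-(2*π))..(0:ℝ), x * h x)
            - ∫ x in (0:ℝ)..(2*π), x * h x) := by
  have h2π : (0:ℝ) < 2*π := by positivity
  rw [omegaPDF_eq_indicator]
  have heq : (fun x => Set.indicator (Set.Icc (-(2*π)) (2*π))
      (fun x => (1/(2*π)) * (1 - |x|/(2*π))) x * h x)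
      = Set.indicator (Set.Icc (-(2*π)) (2*π))
        (fun x => (1/(2*π)) * (1 - |x|/(2*π)) * h x) := by
    funext x
    rw [Set.indicator_apply, Set.indicator_apply]
    split_ifs <;> simp
  rw [heq, integral_indicator measurableSet_Icc, integral_Icc_eq_integral_Ioc,
    ← intervalIntegral.integral_of_le (by linarith)]
  have hint1 : IntervalIntegrable (fun x => (1/(2*π)) * (1 - |x|/(2*π)) * h x)
      volume (-(2*π)) 0 := (Continuous.intervalIntegrable (by fun_prop) _ _)
  have hint2 : IntervalIntegrable (fun x => (1/(2*π)) * (1 - |x|/(2*π)) * h x)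
      volume 0 (2*π) := (Continuous.intervalIntegrable (by fun_prop) _ _)
  rw [← intervalIntegral.integral_add_adjacent_intervals hint1 hint2]
  have hL : ∫ x in (-(2*π))..(0:ℝ), (1/(2*π)) * (1 - |x|/(2*π)) * h x
      = (1/(2*π)) * (∫ x in (-(2*π))..(0:ℝ), h x)
        + (1/(4*π^2)) * ∫ x in (-(2*π))..(0:ℝ), x * h x := by
    have hcongr : ∫ x in (-(2*π))..(0:ℝ), (1/(2*π)) * (1 - |x|/(2*π)) * h x
        = ∫ x in (-(2*π))..(0:ℝ), ((1/(2*π)) * h x + (1/(4*π^2)) * (x * h x)) := by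
      refine intervalIntegral.integral_congr (fun x hx => ?_)
      rw [Set.uIcc_of_le (by linarith)] at hx
      have hx0 : x ≤ 0 := hx.2
      rw [abs_of_nonpos hx0]
      field_simp
      ring
    have hA : IntervalIntegrable (fun x => (1/(2*π)) * h x) volume (-(2*π)) 0 :=
      (continuous_const.mul hc).intervalIntegrable _ _
    have hB : IntervalIntegrable (fun x => (1/(4*π^2)) * (x * h x)) volume (-(2*π)) 0 :=
      (continuous_const.mul (continuous_id'.mul hc)).intervalIntegrable _ _
    rw [hcongr, intervalIntegral.integral_add hA hB,
      intervalIntegral.integral_const_mul, intervalIntegral.integral_const_mul]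
  have hR : ∫ x in (0:ℝ)..(2*π), (1/(2*π)) * (1 - |x|/(2*π)) * h x
      = (1/(2*π)) * (∫ x in (0:ℝ)..(2*π), h x)
        - (1/(4*π^2)) * ∫ x in (0:ℝ)..(2*π), x * h x := by
    have hcongr : ∫ x in (0:ℝ)..(2*π), (1/(2*π)) * (1 - |x|/(2*π)) * h x
        = ∫ x in (0:ℝ)..(2*π), ((1/(2*π)) * h x - (1/(4*π^2)) * (x * h x)) := by
      refine intervalIntegral.integral_congr (fun x hx => ?_)
      rw [Set.uIcc_of_le (by linarith)] at hx
      have hx0 : 0 ≤ x := hx.1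
      rw [abs_of_nonneg hx0]
      field_simp
      ring
    have hA : IntervalIntegrable (fun x => (1/(2*π)) * h x) volume 0 (2*π) :=
      (continuous_const.mul hc).intervalIntegrable _ _
    have hB : IntervalIntegrable (fun x => (1/(4*π^2)) * (x * h x)) volume 0 (2*π) :=
      (continuous_const.mul (continuous_id'.mul hc)).intervalIntegrable _ _
    rw [hcongr, intervalIntegral.integral_sub hA hB,
      intervalIntegral.integral_const_mul, intervalIntegral.integral_const_mul]
  rw [hL, hR]
  ring

lemma integral_omegaPDF : ∫ x, omegaPDF x = 1 := by
  have := integral_omegaPDF_mul (h := fun _ => (1:ℝ)) continuous_const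
  simp only [mul_one] at this
  rw [this]
  have hπ : (π:ℝ) ≠ 0 := Real.pi_ne_zero
  rw [intervalIntegral.integral_const, intervalIntegral.integral_const,
    integral_id, integral_id]
  simp only [smul_eq_mul, mul_one]
  field_simp
  ring

lemma integral_omegaPDF_cos : ∫ x, omegaPDF x * Real.cos x = 0 := by
  rw [integral_omegaPDF_mul Real.continuous_cos]
  rw [integral_cos, integral_cos,
    integral_x_cos, integral_x_cos]
  simp [Real.sin_two_pi, Real.cos_two_pi]

lemma integral_omegaPDF_sin : ∫ x, omegaPDF x * Real.sin x = 0 := by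
  rw [integral_omegaPDF_mul Real.continuous_sin]
  rw [integral_sin, integral_sin,
    integral_x_sin, integral_x_sin]
  simp [Real.sin_two_pi, Real.cos_two_pi]


noncomputable def nug : Measure ℝ := volume.withDensity fun x => ENNReal.ofReal (omegaPDF x)

noncomputable def gm : Measure ℝ := gaussianReal 0 (1/2 : NNReal)

instance : IsProbabilityMeasure gm := by rw [gm]; infer_instance

lemma integrable_omegaPDF : Integrable omegaPDF volume := by
  have := integrable_omegaPDF_mul (h := fun _ => (1:ℝ)) continuous_const
  simpa using this

instance : IsProbabilityMeasure nug := by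
  constructor
  rw [nug, withDensity_apply _ MeasurableSet.univ, Measure.restrict_univ,
    ← ofReal_integral_eq_lintegral_ofReal integrable_omegaPDF
      (Filter.Eventually.of_forall omegaPDF_nonneg),
    integral_omegaPDF]
  simp

lemma nug_integral {E : Type*} [NormedAddCommGroup E] [NormedSpace ℝ E] (g : ℝ → E) :
    ∫ x, g x ∂nug = ∫ x, omegaPDF x • g x := by
  rw [nug]
  have h1 : (fun x => ENNReal.ofReal (omegaPDF x))
      = fun x => (((omegaPDF x).toNNReal : ℝ≥0) : ℝ≥0∞) := rfl
  rw [h1, integral_withDensity_eq_integral_smul omegaPDF_measurable.real_toNNReal]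
  congr 1
  funext x
  rw [NNReal.smul_def, Real.coe_toNNReal _ (omegaPDF_nonneg x)]

lemma nug_integrable_iff {E : Type*} [NormedAddCommGroup E] [NormedSpace ℝ E] (g : ℝ → E) :
    Integrable g nug ↔ Integrable (fun x => omegaPDF x • g x) volume := by
  rw [nug]
  have h1 : (fun x => ENNReal.ofReal (omegaPDF x))
      = fun x => (((omegaPDF x).toNNReal : ℝ≥0) : ℝ≥0∞) := rfl
  have h2 : (fun x => (omegaPDF x).toNNReal • g x) = fun x => omegaPDF x • g x := by
    funext x
    rw [NNReal.smul_def, Real.coe_toNNReal _ (omegaPDF_nonneg x)]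
  rw [h1, integrable_withDensity_iff_integrable_smul omegaPDF_measurable.real_toNNReal, h2]

lemma integral_cos_nug : ∫ x, Real.cos x ∂nug = 0 := by
  rw [nug_integral]
  simpa [smul_eq_mul] using integral_omegaPDF_cos

lemma integral_sin_nug : ∫ x, Real.sin x ∂nug = 0 := by
  rw [nug_integral]
  simpa [smul_eq_mul] using integral_omegaPDF_sin

lemma integrable_cos_nug : Integrable Real.cos nug := by
  rw [nug_integrable_iff]
  simpa [smul_eq_mul] using integrable_omegaPDF_mul Real.continuous_cos

lemma integrable_sin_nug : Integrable Real.sin nug := by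
  rw [nug_integrable_iff]
  simpa [smul_eq_mul] using integrable_omegaPDF_mul Real.continuous_sin

lemma cexp_eq (x : ℝ) : Complex.exp (-Complex.I * x)
    = ((Real.cos x : ℝ) : ℂ) - ((Real.sin x : ℝ) : ℂ) * Complex.I := by
  rw [show -Complex.I * (x:ℂ) = (-(x:ℂ)) * Complex.I by ring, Complex.exp_mul_I,
    Complex.cos_neg, Complex.sin_neg, ← Complex.ofReal_cos, ← Complex.ofReal_sin]
  ring

lemma integrable_cexp_nug : Integrable (fun x : ℝ => Complex.exp (-Complex.I * x)) nug := by
  simp_rw [cexp_eq]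
  exact (integrable_cos_nug.ofReal).sub ((integrable_sin_nug.ofReal).mul_const Complex.I)

lemma integral_cexp_nug : ∫ x, Complex.exp (-Complex.I * x) ∂nug = 0 := by
  have h1 : Integrable (fun x : ℝ => ((Real.cos x : ℝ) : ℂ)) nug := integrable_cos_nug.ofReal
  have h2 : Integrable (fun x : ℝ => ((Real.sin x : ℝ) : ℂ) * Complex.I) nug :=
    integrable_sin_nug.ofReal.mul_const _
  calc ∫ x, Complex.exp (-Complex.I * x) ∂nug
      = ∫ x, (((Real.cos x : ℝ) : ℂ) - ((Real.sin x : ℝ) : ℂ) * Complex.I) ∂nug := by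
        simp_rw [cexp_eq]
    _ = (∫ x, ((Real.cos x : ℝ) : ℂ) ∂nug) - ∫ x, ((Real.sin x : ℝ) : ℂ) * Complex.I ∂nug :=
        integral_sub h1 h2
    _ = 0 := by
        have h3 : ∫ x, ((Real.cos x : ℝ) : ℂ) ∂nug = ((∫ x, Real.cos x ∂nug : ℝ) : ℂ) :=
          integral_ofReal
        have h4 : ∫ x, ((Real.sin x : ℝ) : ℂ) ∂nug = ((∫ x, Real.sin x ∂nug : ℝ) : ℂ) :=
          integral_ofReal
        rw [integral_mul_const, h3, h4, integral_cos_nug, integral_sin_nug]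
        simp

lemma gm_eq : gm = volume.withDensity
    (fun x => ENNReal.ofReal ((Real.sqrt π)⁻¹ * Real.exp (-x^2))) := by
  rw [gm, gaussianReal_of_var_ne_zero _ (by norm_num)]
  congr 1
  funext x
  have hv : ((1/2 : NNReal) : ℝ) = 1/2 := by norm_num
  simp only [gaussianPDF, gaussianPDFReal, hv, sub_zero]
  rw [show 2 * π * (1/2 : ℝ) = π by ring, show (2 * (1/2 : ℝ)) = 1 by norm_num, div_one]


noncomputable def D (z : ℝ × ℝ) : ℝ := π⁻¹ * Real.exp (-(z.1^2 + z.2^2))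

lemma D_nonneg (z : ℝ × ℝ) : 0 ≤ D z := by unfold D; positivity

lemma D_measurable : Measurable D := by unfold D; fun_prop

lemma gauss2d : gm.prod gm
    = (volume : Measure (ℝ × ℝ)).withDensity (fun z => ENNReal.ofReal (D z)) := by
  refine Measure.prod_eq fun s t hs ht => ?_
  rw [Measure.volume_eq_prod, withDensity_apply _ (hs.prod ht), ← Measure.prod_restrict]
  have hpt : ∀ z : ℝ × ℝ, ENNReal.ofReal (D z)
      = ENNReal.ofReal ((Real.sqrt π)⁻¹ * Real.exp (-z.1^2))
        * ENNReal.ofReal ((Real.sqrt π)⁻¹ * Real.exp (-z.2^2)) := by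
    intro z
    rw [← ENNReal.ofReal_mul (by positivity)]
    congr 1
    unfold D
    have h1 : Real.sqrt π * Real.sqrt π = π := Real.mul_self_sqrt Real.pi_pos.le
    have h2 : ((Real.sqrt π)⁻¹ : ℝ) * (Real.sqrt π)⁻¹ = π⁻¹ := by rw [← mul_inv, h1]
    calc π⁻¹ * Real.exp (-(z.1^2 + z.2^2))
        = ((Real.sqrt π)⁻¹ * (Real.sqrt π)⁻¹)
            * (Real.exp (-z.1^2) * Real.exp (-z.2^2)) := by
          rw [h2, ← Real.exp_add]
          ring_nf
      _ = (Real.sqrt π)⁻¹ * Real.exp (-z.1^2) * ((Real.sqrt π)⁻¹ * Real.exp (-z.2^2)) := by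
          ring
  simp_rw [hpt]
  rw [gm_eq, withDensity_apply _ hs, withDensity_apply _ ht]
  exact lintegral_prod_mul
    (f := fun x => ENNReal.ofReal ((Real.sqrt π)⁻¹ * Real.exp (-x^2)))
    (g := fun x => ENNReal.ofReal ((Real.sqrt π)⁻¹ * Real.exp (-x^2)))
    (by fun_prop) (by fun_prop)

lemma gauss2d_integral {E : Type*} [NormedAddCommGroup E] [NormedSpace ℝ E] (g : ℝ × ℝ → E) :
    ∫ z, g z ∂(gm.prod gm) = ∫ z : ℝ × ℝ, D z • g z := by
  rw [gauss2d]
  have h1 : (fun z : ℝ × ℝ => ENNReal.ofReal (D z))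
      = fun z => (((D z).toNNReal : ℝ≥0) : ℝ≥0∞) := rfl
  rw [h1, integral_withDensity_eq_integral_smul D_measurable.real_toNNReal]
  congr 1
  funext z
  rw [NNReal.smul_def, Real.coe_toNNReal _ (D_nonneg z)]

lemma gauss2d_integrable_iff {E : Type*} [NormedAddCommGroup E] [NormedSpace ℝ E] (g : ℝ × ℝ → E) :
    Integrable g (gm.prod gm) ↔ Integrable (fun z => D z • g z) (volume : Measure (ℝ × ℝ)) := by
  rw [gauss2d]
  have h1 : (fun z : ℝ × ℝ => ENNReal.ofReal (D z))
      = fun z => (((D z).toNNReal : ℝ≥0) : ℝ≥0∞) := rfl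
  have h2 : (fun z => (D z).toNNReal • g z) = fun z => D z • g z := by
    funext z
    rw [NNReal.smul_def, Real.coe_toNNReal _ (D_nonneg z)]
  rw [h1, integrable_withDensity_iff_integrable_smul D_measurable.real_toNNReal, h2]


lemma Gamma_three_halves : Real.Gamma (3/2) = Real.sqrt π / 2 := by
  rw [show (3/2:ℝ) = 1/2 + 1 by norm_num, Real.Gamma_add_one (by norm_num),
    Real.Gamma_one_half_eq]
  ring

lemma cx1 : ∫ x : ℂ, ‖x‖^(1:ℝ) * Real.exp (-1 * ‖x‖^(2:ℝ)) = π * (Real.sqrt π / 2) := by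
  rw [Complex.integral_rpow_mul_exp_neg_mul_rpow one_le_two (by norm_num) one_pos]
  rw [show ((1:ℝ)+2)/2 = 3/2 by norm_num, Gamma_three_halves, Real.one_rpow]
  ring

lemma cx2 : ∫ x : ℂ, ‖x‖^(2:ℝ) * Real.exp (-1 * ‖x‖^(2:ℝ)) = π := by
  rw [Complex.integral_rpow_mul_exp_neg_mul_rpow one_le_two (by norm_num) one_pos]
  rw [show ((2:ℝ)+2)/2 = 1 + 1 by norm_num, Real.Gamma_add_one one_ne_zero,
    Real.Gamma_one, Real.one_rpow]
  ring

lemma cx1_int : Integrable (fun x : ℂ => ‖x‖^(1:ℝ) * Real.exp (-1 * ‖x‖^(2:ℝ))) volume := by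
  by_contra hn
  have h0 := cx1
  rw [integral_undef hn] at h0
  have hpos : (0:ℝ) < π * (Real.sqrt π / 2) := by positivity
  linarith

lemma cx2_int : Integrable (fun x : ℂ => ‖x‖^(2:ℝ) * Real.exp (-1 * ‖x‖^(2:ℝ))) volume := by
  by_contra hn
  have h0 := cx2
  rw [integral_undef hn] at h0
  have hpos : (0:ℝ) < π := Real.pi_pos
  linarith

lemma norm_rpow_two (x : ℂ) : ‖x‖^(2:ℝ) = x.re^2 + x.im^2 := by
  rw [show (2:ℝ) = ((2:ℕ):ℝ) by norm_num, Real.rpow_natCast,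
    Complex.sq_norm, Complex.normSq_apply]
  ring

lemma norm_rpow_one (x : ℂ) : ‖x‖^(1:ℝ) = Real.sqrt (x.re^2 + x.im^2) := by
  rw [Real.rpow_one, Complex.norm_def, Complex.normSq_apply]
  congr 1
  ring

noncomputable def FA (z : ℝ × ℝ) : ℝ := Real.sqrt (z.1^2 + z.2^2)

lemma FA_sq (z : ℝ × ℝ) : FA z ^ 2 = z.1^2 + z.2^2 := Real.sq_sqrt (by positivity)

lemma planar_integral (g : ℝ × ℝ → ℝ) :
    ∫ z : ℝ × ℝ, g z = ∫ x : ℂ, g (x.re, x.im) :=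
  (Complex.volume_preserving_equiv_real_prod.integral_comp' g).symm

lemma planar_integrable_iff (g : ℝ × ℝ → ℝ) :
    Integrable (fun x : ℂ => g (x.re, x.im)) volume ↔ Integrable g (volume : Measure (ℝ × ℝ)) :=
  Complex.volume_preserving_equiv_real_prod.integrable_comp_emb
    Complex.measurableEquivRealProd.measurableEmbedding

lemma D_smul_FA (x : ℂ) : D (x.re, x.im) • FA (x.re, x.im)
    = π⁻¹ * (‖x‖^(1:ℝ) * Real.exp (-1 * ‖x‖^(2:ℝ))) := by
  rw [smul_eq_mul]
  unfold D FA
  simp only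
  rw [norm_rpow_one, norm_rpow_two]
  ring_nf

lemma D_smul_FA2 (x : ℂ) : D (x.re, x.im) • FA (x.re, x.im) ^ 2
    = π⁻¹ * (‖x‖^(2:ℝ) * Real.exp (-1 * ‖x‖^(2:ℝ))) := by
  rw [smul_eq_mul, FA_sq]
  unfold D
  simp only
  rw [norm_rpow_two]
  ring_nf

lemma momFA : ∫ z, FA z ∂(gm.prod gm) = Real.sqrt π / 2 := by
  rw [gauss2d_integral, planar_integral (fun z => D z • FA z)]
  simp_rw [D_smul_FA]
  rw [integral_const_mul, cx1, ← mul_assoc, inv_mul_cancel₀ Real.pi_ne_zero, one_mul]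

lemma momFA2 : ∫ z, FA z ^ 2 ∂(gm.prod gm) = 1 := by
  rw [gauss2d_integral, planar_integral (fun z => D z • FA z ^ 2)]
  simp_rw [D_smul_FA2]
  rw [integral_const_mul, cx2, inv_mul_cancel₀ Real.pi_ne_zero]

lemma intFA : Integrable FA (gm.prod gm) := by
  rw [gauss2d_integrable_iff, ← planar_integrable_iff]
  simp_rw [D_smul_FA]
  exact cx1_int.const_mul _

lemma intFA2 : Integrable (fun z => FA z ^ 2) (gm.prod gm) := by
  rw [gauss2d_integrable_iff, ← planar_integrable_iff]
  simp_rw [D_smul_FA2]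
  exact cx2_int.const_mul _


noncomputable def eqv : ((ℝ × ℝ) × (ℝ × ℝ) × ℝ) ≃ᵐ (ℝ × ℝ × ℝ × ℝ × ℝ) :=
  (MeasurableEquiv.prodCongr (MeasurableEquiv.refl (ℝ × ℝ)) MeasurableEquiv.prodAssoc).trans
    MeasurableEquiv.prodAssoc

lemma mp : MeasurePreserving eqv ((gm.prod gm).prod ((gm.prod gm).prod nug)) jointLaw := by
  have h1 : MeasurePreserving
      (Prod.map (id : ℝ × ℝ → ℝ × ℝ)
        (MeasurableEquiv.prodAssoc : ((ℝ × ℝ) × ℝ) ≃ᵐ (ℝ × ℝ × ℝ)))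
      ((gm.prod gm).prod ((gm.prod gm).prod nug))
      ((gm.prod gm).prod (gm.prod (gm.prod nug))) :=
    (MeasurePreserving.id _).prod (measurePreserving_prodAssoc gm gm nug)
  have h2 : MeasurePreserving
      (MeasurableEquiv.prodAssoc : ((ℝ × ℝ) × (ℝ × ℝ × ℝ)) ≃ᵐ (ℝ × ℝ × ℝ × ℝ × ℝ))
      ((gm.prod gm).prod (gm.prod (gm.prod nug))) jointLaw :=
    measurePreserving_prodAssoc gm gm (gm.prod (gm.prod nug))
  exact ⟨eqv.measurable, (h2.comp h1).map_eq⟩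

lemma integral_jointLaw {E : Type*} [NormedAddCommGroup E] [NormedSpace ℝ E]
    (g : (ℝ × ℝ × ℝ × ℝ × ℝ) → E) :
    ∫ p, g p ∂jointLaw = ∫ q, g (eqv q) ∂((gm.prod gm).prod ((gm.prod gm).prod nug)) :=
  (mp.integral_comp' g).symm

lemma W_eqv (q : (ℝ × ℝ) × (ℝ × ℝ) × ℝ) :
    W (eqv q) = ((FA q.1 : ℝ) : ℂ)
      - ((FA q.2.1 : ℝ) : ℂ) * Complex.exp (-Complex.I * (q.2.2 : ℂ)) := rfl

lemma meanW : (∫ p, W p ∂jointLaw) = (Real.sqrt Real.pi / 2 : ℂ) := by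
  rw [integral_jointLaw W, funext W_eqv]
  have hFAc : Integrable (fun z : ℝ × ℝ => ((FA z : ℝ) : ℂ)) (gm.prod gm) := intFA.ofReal
  have h1 : Integrable (fun q : (ℝ × ℝ) × (ℝ × ℝ) × ℝ => ((FA q.1 : ℝ) : ℂ))
      ((gm.prod gm).prod ((gm.prod gm).prod nug)) := by
    simpa using hFAc.mul_prod (integrable_const (1 : ℂ))
  have hinner : Integrable
      (fun z : (ℝ × ℝ) × ℝ => ((FA z.1 : ℝ) : ℂ) * Complex.exp (-Complex.I * z.2))
      ((gm.prod gm).prod nug) := hFAc.mul_prod integrable_cexp_nug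
  have h2 : Integrable (fun q : (ℝ × ℝ) × (ℝ × ℝ) × ℝ =>
      ((FA q.2.1 : ℝ) : ℂ) * Complex.exp (-Complex.I * q.2.2))
      ((gm.prod gm).prod ((gm.prod gm).prod nug)) := by
    simpa using (integrable_const (1 : ℂ)).mul_prod hinner
  rw [integral_sub h1 h2]
  have hfst : ∫ q : (ℝ × ℝ) × (ℝ × ℝ) × ℝ, ((FA q.1 : ℝ) : ℂ)
      ∂((gm.prod gm).prod ((gm.prod gm).prod nug)) = ((Real.sqrt π / 2 : ℝ) : ℂ) := by
    have hre : ∫ z, ((FA z : ℝ) : ℂ) ∂(gm.prod gm)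
        = ((∫ z, FA z ∂(gm.prod gm) : ℝ) : ℂ) := integral_ofReal
    have := integral_fun_fst (μ := gm.prod gm) (ν := (gm.prod gm).prod nug)
      (f := fun z : ℝ × ℝ => ((FA z : ℝ) : ℂ))
    simp only [measure_univ, ENNReal.toReal_one, probReal_univ, one_smul] at this
    rw [this, hre, momFA]
  have hsnd : ∫ q : (ℝ × ℝ) × (ℝ × ℝ) × ℝ,
      ((FA q.2.1 : ℝ) : ℂ) * Complex.exp (-Complex.I * q.2.2)
      ∂((gm.prod gm).prod ((gm.prod gm).prod nug)) = 0 := by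
    have := integral_fun_snd (μ := gm.prod gm) (ν := (gm.prod gm).prod nug)
      (f := fun z : (ℝ × ℝ) × ℝ => ((FA z.1 : ℝ) : ℂ) * Complex.exp (-Complex.I * z.2))
    simp only [measure_univ, ENNReal.toReal_one, probReal_univ, one_smul] at this
    rw [this, integral_prod_mul (f := fun z : ℝ × ℝ => ((FA z : ℝ) : ℂ))
      (g := fun w : ℝ => Complex.exp (-Complex.I * w)), integral_cexp_nug, mul_zero]
  rw [hfst, hsnd, sub_zero]
  push_cast
  ring

lemma var_pt (q : (ℝ × ℝ) × (ℝ × ℝ) × ℝ) :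
    ‖W (eqv q) - ((Real.sqrt π / 2 : ℝ) : ℂ)‖ ^ 2
      = ((FA q.1 - Real.sqrt π / 2) ^ 2 + FA q.2.1 ^ 2)
        - 2 * ((FA q.1 - Real.sqrt π / 2) * (FA q.2.1 * Real.cos q.2.2)) := by
  rw [W_eqv, cexp_eq, Complex.sq_norm, Complex.normSq_apply]
  simp only [Complex.sub_re, Complex.sub_im, Complex.mul_re, Complex.mul_im,
    Complex.ofReal_re, Complex.ofReal_im, Complex.I_re, Complex.I_im]
  ring_nf
  nlinarith [Real.sin_sq_add_cos_sq q.2.2, sq_nonneg (FA q.2.1)]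

lemma varW : ∫ p, ‖W p - ((Real.sqrt π / 2 : ℝ) : ℂ)‖ ^ 2 ∂jointLaw
    = (8 - π) / 4 := by
  rw [integral_jointLaw (fun p => ‖W p - ((Real.sqrt π / 2 : ℝ) : ℂ)‖ ^ 2),
    funext var_pt]
  have hsq : Real.sqrt π * Real.sqrt π = π := Real.mul_self_sqrt Real.pi_pos.le
  have hexp : (fun z : ℝ × ℝ => (FA z - Real.sqrt π / 2) ^ 2)
      = fun z => FA z ^ 2 - (2 * (Real.sqrt π / 2)) * FA z + (Real.sqrt π / 2) ^ 2 := by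
    funext z; ring
  have hFsubsq : Integrable (fun z : ℝ × ℝ => (FA z - Real.sqrt π / 2) ^ 2) (gm.prod gm) := by
    rw [hexp]
    exact (intFA2.sub (intFA.const_mul _)).add (integrable_const _)
  have h1 : Integrable (fun q : (ℝ × ℝ) × (ℝ × ℝ) × ℝ => (FA q.1 - Real.sqrt π / 2) ^ 2)
      ((gm.prod gm).prod ((gm.prod gm).prod nug)) := by
    simpa using hFsubsq.mul_prod (integrable_const (1 : ℝ))
  have hinner2 : Integrable (fun z : (ℝ × ℝ) × ℝ => FA z.1 ^ 2) ((gm.prod gm).prod nug) := by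
    simpa using intFA2.mul_prod (integrable_const (1 : ℝ))
  have h2 : Integrable (fun q : (ℝ × ℝ) × (ℝ × ℝ) × ℝ => FA q.2.1 ^ 2)
      ((gm.prod gm).prod ((gm.prod gm).prod nug)) := by
    simpa using (integrable_const (1 : ℝ)).mul_prod hinner2
  have hinner3 : Integrable (fun z : (ℝ × ℝ) × ℝ => FA z.1 * Real.cos z.2)
      ((gm.prod gm).prod nug) := intFA.mul_prod integrable_cos_nug
  have h3 : Integrable (fun q : (ℝ × ℝ) × (ℝ × ℝ) × ℝ =>
      (FA q.1 - Real.sqrt π / 2) * (FA q.2.1 * Real.cos q.2.2))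
      ((gm.prod gm).prod ((gm.prod gm).prod nug)) :=
    (intFA.sub (integrable_const _)).mul_prod hinner3
  have h12 : Integrable (fun q : (ℝ × ℝ) × (ℝ × ℝ) × ℝ =>
      (FA q.1 - Real.sqrt π / 2) ^ 2 + FA q.2.1 ^ 2)
      ((gm.prod gm).prod ((gm.prod gm).prod nug)) := h1.add h2
  rw [integral_sub h12 (h3.const_mul 2), integral_add h1 h2, integral_const_mul]
  have e1 : ∫ q : (ℝ × ℝ) × (ℝ × ℝ) × ℝ, (FA q.1 - Real.sqrt π / 2) ^ 2
      ∂((gm.prod gm).prod ((gm.prod gm).prod nug)) = 1 - π / 4 := by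
    have := integral_fun_fst (μ := gm.prod gm) (ν := (gm.prod gm).prod nug)
      (f := fun z : ℝ × ℝ => (FA z - Real.sqrt π / 2) ^ 2)
    simp only [measure_univ, ENNReal.toReal_one, probReal_univ, one_smul] at this
    have hb : Integrable (fun z : ℝ × ℝ => (2 * (Real.sqrt π / 2)) * FA z) (gm.prod gm) :=
      intFA.const_mul _
    have ha : Integrable (fun z : ℝ × ℝ => FA z ^ 2 - (2 * (Real.sqrt π / 2)) * FA z)
        (gm.prod gm) := intFA2.sub hb
    rw [this, hexp, integral_add ha (integrable_const _),
      integral_sub intFA2 hb, integral_const_mul, momFA2, momFA,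
      integral_const]
    simp only [measure_univ, ENNReal.toReal_one, probReal_univ, one_smul, smul_eq_mul]
    nlinarith [hsq]
  have e2 : ∫ q : (ℝ × ℝ) × (ℝ × ℝ) × ℝ, FA q.2.1 ^ 2
      ∂((gm.prod gm).prod ((gm.prod gm).prod nug)) = 1 := by
    have ha := integral_fun_snd (μ := gm.prod gm) (ν := (gm.prod gm).prod nug)
      (f := fun z : (ℝ × ℝ) × ℝ => FA z.1 ^ 2)
    simp only [measure_univ, ENNReal.toReal_one, probReal_univ, one_smul] at ha
    have hb := integral_fun_fst (μ := gm.prod gm) (ν := nug)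
      (f := fun z : ℝ × ℝ => FA z ^ 2)
    simp only [measure_univ, ENNReal.toReal_one, probReal_univ, one_smul] at hb
    rw [ha, hb, momFA2]
  have e3 : ∫ q : (ℝ × ℝ) × (ℝ × ℝ) × ℝ,
      (FA q.1 - Real.sqrt π / 2) * (FA q.2.1 * Real.cos q.2.2)
      ∂((gm.prod gm).prod ((gm.prod gm).prod nug)) = 0 := by
    rw [integral_prod_mul (f := fun z : ℝ × ℝ => FA z - Real.sqrt π / 2)
      (g := fun z : (ℝ × ℝ) × ℝ => FA z.1 * Real.cos z.2)]
    have hz : ∫ z, (FA z - Real.sqrt π / 2) ∂(gm.prod gm) = 0 := by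
      rw [integral_sub intFA (integrable_const _), momFA, integral_const]
      simp [measure_univ]
    rw [hz, zero_mul]
  rw [e1, e2, e3]
  ring

end MVAux

/-- Mean and variance of `W = A - A' e^{-iω}`: `E[W] = √π/2` and
`E[|W - E[W]|²] = (8 - π)/4`. -/
theorem mean_var_W :
    (∫ p, W p ∂jointLaw) = (Real.sqrt Real.pi / 2 : ℂ) ∧
    (∫ p, ‖W p - ∫ q, W q ∂jointLaw‖ ^ 2 ∂jointLaw) = (8 - Real.pi) / 4 := by
  refine ⟨MVAux.meanW, ?_⟩
  rw [MVAux.meanW]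
  have hc : (Real.sqrt Real.pi / 2 : ℂ) = ((Real.sqrt Real.pi / 2 : ℝ) : ℂ) := by
    push_cast
    ring
  rw [hc]
  exact MVAux.varW
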